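/- Let f : [t0,∞) → ℝ be differentiable and satisfy f'(t) ≥ (3/t)(1 - e^{f(t)/2}) for all t ≥ t0 > 0. Then for every ε > 0 there exists T ≥ t0 such that f(t) ≥ -ε for all t ≥ T. -/

import Mathlib

theorem stmt0 (f : ℝ → ℝ) (t0 : ℝ) (ht0 : 0 < t0)
    (hdiff : ∀ t ≥ t0, DifferentiableAt ℝ f t)
    (hineq : ∀ t ≥ t0, deriv f t ≥ (3 / t) * (1 - Real.exp (f t / 2))) :
    ∀ ε > 0, ∃ T ≥ t0, ∀ t ≥ T, f t ≥ -ε := by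
  intro ε hε
  set δ : ℝ := 3 * (1 - Real.exp (-ε / 2)) with hδdef
  have hexp : Real.exp (-ε / 2) < 1 := by
    rw [Real.exp_lt_one_iff]; linarith
  have hδ : 0 < δ := by
    have : 0 < 1 - Real.exp (-ε / 2) := by linarith
    positivity
  -- key derivative lower bound when f x < -ε
  have hder : ∀ x ≥ t0, f x < -ε → δ / x ≤ deriv f x := by
    intro x hx hfx
    have hx0 : 0 < x := lt_of_lt_of_le ht0 hx
    have h1 : Real.exp (f x / 2) ≤ Real.exp (-ε / 2) :=
      Real.exp_le_exp.2 (by linarith)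
    have h2 : (3 / x) * (1 - Real.exp (-ε/2)) ≤ (3 / x) * (1 - Real.exp (f x / 2)) :=
      mul_le_mul_of_nonneg_left (by linarith) (by positivity)
    have h3 := hineq x hx
    have heq : (3 / x) * (1 - Real.exp (-ε/2)) = δ / x := by
      field_simp [hδdef]
      rw [hδdef, neg_div]
    linarith [heq ▸ h2]
  -- continuity of f on [t0, ∞)
  have hcont : ∀ x ≥ t0, ContinuousAt f x := fun x hx => (hdiff x hx).continuousAt
  -- monotonicity helper: if f < -ε on (a,b], then f a ≤ f b
  have hmono : ∀ a b : ℝ, t0 ≤ a → a ≤ b → (∀ s, a < s → s ≤ b → f s < -ε) → f a ≤ f b := by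
    intro a b ha hab hneg
    have := monotoneOn_of_deriv_nonneg (convex_Icc a b) (f := f)
      (fun x hx => (hcont x (le_trans ha hx.1)).continuousWithinAt)
      (fun x hx => by
        rw [interior_Icc] at hx
        exact (hdiff x (le_trans ha hx.1.le)).differentiableWithinAt)
      (fun x hx => by
        rw [interior_Icc] at hx
        have hx0 : 0 < x := lt_of_lt_of_le ht0 (le_trans ha hx.1.le)
        have h1 := hder x (le_trans ha hx.1.le) (hneg x hx.1 hx.2.le)
        have h2 : 0 < δ / x := by positivity
        linarith)
    exact this (Set.left_mem_Icc.2 hab) (Set.right_mem_Icc.2 hab) hab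
  -- Step 1: there exists T ≥ t0 with f T ≥ -ε
  have hstep1 : ∃ T ≥ t0, -ε ≤ f T := by
    by_contra h
    push_neg at h
    set g : ℝ → ℝ := fun t => f t - δ * Real.log t with hg
    set t1 : ℝ := t0 * Real.exp ((-ε - f t0 + 1) / δ) with ht1
    have ht1pos : 0 < t1 := by positivity
    have hft0 : f t0 < -ε := h t0 le_rfl
    have hnum : (0:ℝ) ≤ (-ε - f t0 + 1) / δ := by
      apply div_nonneg (by linarith) hδ.le
    have ht0t1 : t0 ≤ t1 := by
      calc t0 = t0 * 1 := by ring
        _ ≤ t1 := by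
          rw [ht1]
          exact mul_le_mul_of_nonneg_left (Real.one_le_exp hnum) ht0.le
    have hgmono : MonotoneOn g (Set.Icc t0 t1) := by
      apply monotoneOn_of_deriv_nonneg (convex_Icc t0 t1)
      · intro x hx
        exact ((hcont x hx.1).sub (((Real.continuousAt_log
          (lt_of_lt_of_le ht0 hx.1).ne').const_smul δ).congr (by
            filter_upwards with y; simp [smul_eq_mul]))).continuousWithinAt
      · intro x hx
        rw [interior_Icc] at hx
        have hx0 : 0 < x := lt_of_lt_of_le ht0 hx.1.le
        exact (((hdiff x hx.1.le).sub
          ((Real.differentiableAt_log hx0.ne').const_mul δ)).differentiableWithinAt)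
      · intro x hx
        rw [interior_Icc] at hx
        have hx0 : 0 < x := lt_of_lt_of_le ht0 hx.1.le
        have hD : HasDerivAt g (deriv f x - δ * x⁻¹) x :=
          ((hdiff x hx.1.le).hasDerivAt).sub ((Real.hasDerivAt_log hx0.ne').const_mul δ)
        rw [hD.deriv]
        have h1 := hder x hx.1.le (h x hx.1.le)
        have : δ / x = δ * x⁻¹ := by ring
        linarith [this ▸ h1]
    have hle := hgmono (Set.left_mem_Icc.2 ht0t1) (Set.right_mem_Icc.2 ht0t1) ht0t1
    have hlog : Real.log t1 = Real.log t0 + (-ε - f t0 + 1) / δ := by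
      rw [ht1, Real.log_mul ht0.ne' (Real.exp_ne_zero _), Real.log_exp]
    have hgt0 : g t0 = f t0 - δ * Real.log t0 := rfl
    have hgt1 : g t1 = f t1 - δ * Real.log t1 := rfl
    rw [hgt0, hgt1, hlog] at hle
    have hδne : δ ≠ 0 := hδ.ne'
    have hcancel : δ * ((-ε - f t0 + 1) / δ) = -ε - f t0 + 1 := by
      field_simp
    have hft1 : f t1 < -ε := h t1 ht0t1
    nlinarith [hle, hcancel]
  obtain ⟨T, hTt0, hfT⟩ := hstep1
  refine ⟨T, hTt0, ?_⟩
  intro t ht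
  by_contra hft
  push_neg at hft
  have hTt : T < t := by
    rcases lt_or_eq_of_le ht with h | h
    · exact h
    · exfalso; rw [h] at hfT; linarith
  set A : Set ℝ := Set.Icc T t ∩ f ⁻¹' Set.Ici (-ε) with hA
  have hclosed : IsClosed A := by
    apply ContinuousOn.preimage_isClosed_of_isClosed
      (fun x hx => (hcont x (le_trans hTt0 hx.1)).continuousWithinAt)
      isClosed_Icc isClosed_Ici
  have hne : A.Nonempty := ⟨T, ⟨le_rfl, hTt.le⟩, hfT⟩
  have hbdd : BddAbove A := (BddAbove.mono Set.inter_subset_left) bddAbove_Icc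
  set S : ℝ := sSup A with hS
  have hSA : S ∈ A := hclosed.csSup_mem hne hbdd
  have hSt0 : t0 ≤ S := le_trans hTt0 hSA.1.1
  have hSt : S ≤ t := hSA.1.2
  have hneg : ∀ s, S < s → s ≤ t → f s < -ε := by
    intro s hs hst
    by_contra hfs
    push_neg at hfs
    have : s ∈ A := ⟨⟨le_trans hSA.1.1 hs.le, hst⟩, hfs⟩
    exact absurd (le_csSup hbdd this) (not_le.2 hs)
  have := hmono S t hSt0 hSt hneg
  have hfS : -ε ≤ f S := hSA.2
  linarith
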